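/- Let H be a Hilbert space and φ a bounded finite potent endomorphism with index i(φ). Then the adjoint φ* is bounded finite potent and i(φ*) = i(φ). -/

import Mathlib

/-- The adjoint of a bounded finite potent endomorphism is bounded finite potent and
has the same index: if `n` is the nilpotency order of `φ|_{U_φ}` and `n'` that of
`φ*|_{U_{φ*}}`, then `n' = n`. -/
theorem adjoint_index_eq {H : Type*} [NormedAddCommGroup H]
    [InnerProductSpace ℂ H] [CompleteSpace H]
    (φ : H →L[ℂ] H)
    (W U : Submodule ℂ H) (hWU : IsCompl W U) [FiniteDimensional ℂ W]
    (hW : ∀ x ∈ W, φ.toLinearMap x ∈ W) (hU : ∀ x ∈ U, φ.toLinearMap x ∈ U)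
    (hWa : Function.Bijective (φ.toLinearMap.restrict hW))
    (W' U' : Submodule ℂ H) (hWU' : IsCompl W' U') [FiniteDimensional ℂ W']
    (hW' : ∀ x ∈ W', (ContinuousLinearMap.adjoint φ).toLinearMap x ∈ W')
    (hU' : ∀ x ∈ U', (ContinuousLinearMap.adjoint φ).toLinearMap x ∈ U')
    (hWa' : Function.Bijective ((ContinuousLinearMap.adjoint φ).toLinearMap.restrict hW'))
    -- `n` is the index of `φ`: the minimal nilpotency order of `φ|_U`
    (n : ℕ) (hn : (φ.toLinearMap.restrict hU) ^ n = 0)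
    (hnmin : ∀ m : ℕ, (φ.toLinearMap.restrict hU) ^ m = 0 → n ≤ m)
    -- `n'` is the index of `φ*`
    (n' : ℕ) (hn' : ((ContinuousLinearMap.adjoint φ).toLinearMap.restrict hU') ^ n' = 0)
    (hnmin' : ∀ m : ℕ,
      ((ContinuousLinearMap.adjoint φ).toLinearMap.restrict hU') ^ m = 0 → n' ≤ m) :
    (∃ m : ℕ, FiniteDimensional ℂ
      (LinearMap.range ((ContinuousLinearMap.adjoint φ).toLinearMap ^ m))) ∧
    n' = n := by
  set ψ := ContinuousLinearMap.adjoint φ with hψ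
  -- inner product identities for powers
  have key : ∀ (m : ℕ) (y x : H),
      (inner ℂ ((ψ.toLinearMap ^ m) y) x : ℂ) = inner ℂ y ((φ.toLinearMap ^ m) x) := by
    intro m
    induction m with
    | zero => intro y x; simp
    | succ m ih =>
      intro y x
      rw [pow_succ, pow_succ']
      simp only [Module.End.mul_apply]
      rw [ih]
      exact ContinuousLinearMap.adjoint_inner_left φ _ y
  have key2 : ∀ (m : ℕ) (x y : H),
      (inner ℂ ((φ.toLinearMap ^ m) x) y : ℂ) = inner ℂ x ((ψ.toLinearMap ^ m) y) := by
    intro m x y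
    rw [← inner_conj_symm, ← key, inner_conj_symm]
  -- powers kill U and U'
  have hU0 : ∀ u ∈ U, (φ.toLinearMap ^ n) u = 0 := by
    intro u hu
    rw [Module.End.pow_restrict] at hn
    have := DFunLike.congr_fun hn ⟨u, hu⟩
    simpa [Subtype.ext_iff] using this
  have hU'0 : ∀ u ∈ U', (ψ.toLinearMap ^ n') u = 0 := by
    intro u hu
    rw [Module.End.pow_restrict] at hn'
    have := DFunLike.congr_fun hn' ⟨u, hu⟩
    simpa [Subtype.ext_iff] using this
  -- surjectivity of powers on W and W'
  have hWsurj : ∀ (m : ℕ), ∀ w ∈ W, ∃ w₀ ∈ W, (φ.toLinearMap ^ m) w₀ = w := by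
    intro m
    induction m with
    | zero => intro w hw; exact ⟨w, hw, rfl⟩
    | succ m ih =>
      intro w hw
      obtain ⟨⟨w₁, hw₁⟩, hval⟩ := hWa.2 ⟨w, hw⟩
      rw [Subtype.ext_iff, LinearMap.restrict_coe_apply] at hval
      obtain ⟨w₀, hw₀, hval₀⟩ := ih w₁ hw₁
      refine ⟨w₀, hw₀, ?_⟩
      rw [pow_succ']
      simp only [Module.End.mul_apply, hval₀]
      exact hval
  have hW'surj : ∀ (m : ℕ), ∀ w ∈ W', ∃ w₀ ∈ W', (ψ.toLinearMap ^ m) w₀ = w := by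
    intro m
    induction m with
    | zero => intro w hw; exact ⟨w, hw, rfl⟩
    | succ m ih =>
      intro w hw
      obtain ⟨⟨w₁, hw₁⟩, hval⟩ := hWa'.2 ⟨w, hw⟩
      rw [Subtype.ext_iff, LinearMap.restrict_coe_apply] at hval
      obtain ⟨w₀, hw₀, hval₀⟩ := ih w₁ hw₁
      refine ⟨w₀, hw₀, ?_⟩
      rw [pow_succ']
      simp only [Module.End.mul_apply, hval₀]
      exact hval
  -- U' is orthogonal to W
  have hU'W : ∀ u' ∈ U', ∀ w ∈ W, (inner ℂ u' w : ℂ) = 0 := by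
    intro u' hu' w hw
    obtain ⟨w₀, hw₀, hval⟩ := hWsurj n' w hw
    rw [← hval, ← key, hU'0 u' hu', inner_zero_left]
  -- U is orthogonal to W'
  have hUW' : ∀ u ∈ U, ∀ w' ∈ W', (inner ℂ u w' : ℂ) = 0 := by
    intro u hu w' hw'
    obtain ⟨w₀, hw₀, hval⟩ := hW'surj n w' hw'
    rw [← hval, ← key2, hU0 u hu, inner_zero_left]
  -- ψ^n kills U'
  have claim1 : ∀ u' ∈ U', (ψ.toLinearMap ^ n) u' = 0 := by
    intro u' hu'
    have hz : ∀ x : H, (inner ℂ ((ψ.toLinearMap ^ n) u') x : ℂ) = 0 := by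
      intro x
      rw [key]
      obtain ⟨w, hw, u, hu, rfl⟩ :=
        Submodule.mem_sup.1 (hWU.sup_eq_top ▸ Submodule.mem_top (x := x))
      rw [map_add, hU0 u hu, add_zero]
      exact hU'W u' hu' _ (Module.End.pow_apply_mem_of_forall_mem n hW w hw)
    have := hz ((ψ.toLinearMap ^ n) u')
    rwa [inner_self_eq_zero] at this
  -- φ^{n'} kills U
  have claim2 : ∀ u ∈ U, (φ.toLinearMap ^ n') u = 0 := by
    intro u hu
    have hz : ∀ x : H, (inner ℂ ((φ.toLinearMap ^ n') u) x : ℂ) = 0 := by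
      intro x
      rw [key2]
      obtain ⟨w, hw, u', hu', rfl⟩ :=
        Submodule.mem_sup.1 (hWU'.sup_eq_top ▸ Submodule.mem_top (x := x))
      rw [map_add, hU'0 u' hu', add_zero]
      exact hUW' u hu _ (Module.End.pow_apply_mem_of_forall_mem n' hW' w hw)
    have := hz ((φ.toLinearMap ^ n') u)
    rwa [inner_self_eq_zero] at this
  constructor
  · refine ⟨n', ?_⟩
    have hle : LinearMap.range (ψ.toLinearMap ^ n') ≤ W' := by
      rintro _ ⟨x, rfl⟩
      obtain ⟨w, hw, u', hu', rfl⟩ :=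
        Submodule.mem_sup.1 (hWU'.sup_eq_top ▸ Submodule.mem_top (x := x))
      rw [map_add, hU'0 u' hu', add_zero]
      exact Module.End.pow_apply_mem_of_forall_mem n' hW' w hw
    exact Submodule.finiteDimensional_of_le hle
  · refine le_antisymm ?_ ?_
    · apply hnmin'
      rw [Module.End.pow_restrict]
      ext ⟨u', hu'⟩
      simpa [Subtype.ext_iff] using claim1 u' hu'
    · apply hnmin
      rw [Module.End.pow_restrict]
      ext ⟨u, hu⟩
      simpa [Subtype.ext_iff] using claim2 u hu
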